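/- arXiv:2408.11467 — 2 statements merged into one kernel-verified Lean document; each statement's English description precedes it below -/
import Mathlib

section
/- If the entropy of a uniform L-symbol secret Δ satisfies: Δ is recoverable from any R-|D| of the shares (Q_n)_{n∈[N]\D}, and Δ is independent of any X of the shares, then the total entropy of all shares satisfies Σ_{n∈[N]\D} H(Q_n) ≥ L·(N-|D|)/(R-X-|D|). (Threshold secret sharing communication lower bound via averaging over recovery sets.) -/
set_option linter.unusedVariables false
set_option linter.unusedSectionVars false


open scoped BigOperators

/-- `p` is a probability mass function on the finite sample space `Ω`. -/
def IsPMF {Ω : Type} [Fintype Ω] (p : Ω → ℝ) : Prop :=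
  (∀ ω, 0 ≤ p ω) ∧ ∑ ω : Ω, p ω = 1

open Classical in
/-- Probability of the event `E` under the pmf `p`. -/
noncomputable def probEvent {Ω : Type} [Fintype Ω] (p : Ω → ℝ) (E : Ω → Prop) : ℝ :=
  ∑ ω : Ω, if E ω then p ω else 0

/-- Shannon entropy (base `b`) of the random variable `X` under the pmf `p`. -/
noncomputable def entH {Ω α : Type} [Fintype Ω] [Fintype α]
    (b : ℝ) (p : Ω → ℝ) (X : Ω → α) : ℝ :=
  -∑ x : α, probEvent p (fun ω => X ω = x) * Real.logb b (probEvent p (fun ω => X ω = x))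

/-- Conditional entropy `H(X | Y) = H(X,Y) - H(Y)`. -/
noncomputable def condH {Ω α β : Type} [Fintype Ω] [Fintype α] [Fintype β]
    (b : ℝ) (p : Ω → ℝ) (X : Ω → α) (Y : Ω → β) : ℝ :=
  entH b p (fun ω => (X ω, Y ω)) - entH b p Y

/-- Mutual information `I(X;Y) = H(X) + H(Y) - H(X,Y)`. -/
noncomputable def mutI {Ω α β : Type} [Fintype Ω] [Fintype α] [Fintype β]
    (b : ℝ) (p : Ω → ℝ) (X : Ω → α) (Y : Ω → β) : ℝ :=
  entH b p X + entH b p Y - entH b p (fun ω => (X ω, Y ω))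

/-- Conditional mutual information `I(X;Y | Z) = H(X|Z) - H(X|Y,Z)`. -/
noncomputable def condMI {Ω α β δ : Type} [Fintype Ω] [Fintype α] [Fintype β] [Fintype δ]
    (b : ℝ) (p : Ω → ℝ) (X : Ω → α) (Y : Ω → β) (Z : Ω → δ) : ℝ :=
  condH b p X Z - condH b p X (fun ω => (Y ω, Z ω))

/-- `X` and `Y` are independent random variables under `p`. -/
def IndepRV {Ω α β : Type} [Fintype Ω] [Fintype α] [Fintype β]
    (p : Ω → ℝ) (X : Ω → α) (Y : Ω → β) : Prop :=
  ∀ x y, probEvent p (fun ω => X ω = x ∧ Y ω = y)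
    = probEvent p (fun ω => X ω = x) * probEvent p (fun ω => Y ω = y)

/-- `X` is uniformly distributed under `p`. -/
def IsUniform {Ω α : Type} [Fintype Ω] [Fintype α] (p : Ω → ℝ) (X : Ω → α) : Prop :=
  ∀ x, probEvent p (fun ω => X ω = x) = ((Fintype.card α : ℝ))⁻¹

section Helpers
variable {Ω α β : Type} [Fintype Ω] [Fintype α] [Fintype β] {b : ℝ} {p : Ω → ℝ}

lemma probEvent_congr {E F : Ω → Prop} (h : ∀ ω, E ω ↔ F ω) :
    probEvent p E = probEvent p F := by
  unfold probEvent
  have : E = F := funext fun ω => propext (h ω)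
  rw [this]

lemma probEvent_nonneg (hp : IsPMF p) (E : Ω → Prop) : 0 ≤ probEvent p E := by
  unfold probEvent
  refine Finset.sum_nonneg fun ω _ => ?_
  split_ifs
  · exact hp.1 ω
  · exact le_refl 0

lemma probEvent_mono (hp : IsPMF p) {E F : Ω → Prop} (h : ∀ ω, E ω → F ω) :
    probEvent p E ≤ probEvent p F := by
  unfold probEvent
  refine Finset.sum_le_sum fun ω _ => ?_
  by_cases hE : E ω
  · simp [hE, h ω hE]
  · split_ifs
    · exact hp.1 ω
    · exact le_refl 0

lemma probEvent_le_one (hp : IsPMF p) (E : Ω → Prop) : probEvent p E ≤ 1 := by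
  rw [← hp.2]
  unfold probEvent
  refine Finset.sum_le_sum fun ω _ => ?_
  split_ifs
  · exact le_refl _
  · exact hp.1 ω

lemma probEvent_false (hp : IsPMF p) {E : Ω → Prop} (h : ∀ ω, ¬ E ω) : probEvent p E = 0 := by
  unfold probEvent
  exact Finset.sum_eq_zero fun ω _ => by simp [h ω]

lemma sum_probEvent (hp : IsPMF p) (X : Ω → α) :
    ∑ x : α, probEvent p (fun ω => X ω = x) = 1 := by
  classical
  unfold probEvent
  rw [Finset.sum_comm]
  rw [← hp.2]
  refine Finset.sum_congr rfl fun ω _ => ?_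
  simp [Finset.sum_ite_eq]

lemma probEvent_marginal_right (hp : IsPMF p) (X : Ω → α) (Y : Ω → β) (y : β) :
    probEvent p (fun ω => Y ω = y) = ∑ x : α, probEvent p (fun ω => (X ω, Y ω) = (x, y)) := by
  classical
  unfold probEvent
  rw [Finset.sum_comm]
  refine Finset.sum_congr rfl fun ω _ => ?_
  by_cases h : Y ω = y
  · simp [h, Prod.ext_iff, Finset.sum_ite_eq]
  · simp [h, Prod.ext_iff]

lemma probEvent_marginal_left (hp : IsPMF p) (X : Ω → α) (Y : Ω → β) (x : α) :
    probEvent p (fun ω => X ω = x) = ∑ y : β, probEvent p (fun ω => (X ω, Y ω) = (x, y)) := by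
  classical
  unfold probEvent
  rw [Finset.sum_comm]
  refine Finset.sum_congr rfl fun ω _ => ?_
  by_cases h : X ω = x
  · simp [h, Prod.ext_iff, Finset.sum_ite_eq]
  · simp [h, Prod.ext_iff]

end Helpers

section Entropy
variable {Ω α β : Type} [Fintype Ω] [Fintype α] [Fintype β] {b : ℝ} {p : Ω → ℝ}

lemma entH_nonneg (hb : 1 < b) (hp : IsPMF p) (X : Ω → α) : 0 ≤ entH b p X := by
  unfold entH
  rw [neg_nonneg]
  refine Finset.sum_nonpos fun x _ => ?_
  have h0 := probEvent_nonneg hp (fun ω => X ω = x)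
  have h1 := probEvent_le_one hp (fun ω => X ω = x)
  exact mul_nonpos_iff.mpr (Or.inl ⟨h0, Real.logb_nonpos hb h0 h1⟩)

/-- `H(Y) ≤ H(X,Y)` -/
lemma entH_snd_le_pair (hb : 1 < b) (hp : IsPMF p) (X : Ω → α) (Y : Ω → β) :
    entH b p Y ≤ entH b p (fun ω => (X ω, Y ω)) := by
  classical
  unfold entH
  rw [neg_le_neg_iff]
  have hm : ∀ y, probEvent p (fun ω => Y ω = y)
      = ∑ x : α, probEvent p (fun ω => (X ω, Y ω) = (x, y)) :=
    probEvent_marginal_right hp X Y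
  calc ∑ c : α × β, probEvent p (fun ω => (X ω, Y ω) = c) * Real.logb b (probEvent p (fun ω => (X ω, Y ω) = c))
      = ∑ y : β, ∑ x : α, probEvent p (fun ω => (X ω, Y ω) = (x, y)) * Real.logb b (probEvent p (fun ω => (X ω, Y ω) = (x, y))) := by
        rw [Fintype.sum_prod_type, Finset.sum_comm]
    _ ≤ ∑ y : β, ∑ x : α, probEvent p (fun ω => (X ω, Y ω) = (x, y)) * Real.logb b (probEvent p (fun ω => Y ω = y)) := by
        refine Finset.sum_le_sum fun y _ => Finset.sum_le_sum fun x _ => ?_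
        have h0 := probEvent_nonneg hp (fun ω => (X ω, Y ω) = (x, y))
        rcases eq_or_lt_of_le h0 with h | h
        · rw [← h]; simp
        · refine mul_le_mul_of_nonneg_left ?_ (le_of_lt h)
          refine Real.logb_le_logb_of_le hb h ?_
          exact probEvent_mono hp fun ω hω => by rw [Prod.ext_iff] at hω; exact hω.2
    _ = ∑ y : β, probEvent p (fun ω => Y ω = y) * Real.logb b (probEvent p (fun ω => Y ω = y)) := by
        refine Finset.sum_congr rfl fun y _ => ?_
        rw [hm y, Finset.sum_mul]

/-- Gibbs inequality core. -/
lemma gibbs_sum {α β : Type} [Fintype α] [Fintype β] {b : ℝ} (hb : 1 < b)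
    (r : α × β → ℝ) (mX : α → ℝ) (mY : β → ℝ)
    (hr0 : ∀ c, 0 ≤ r c)
    (hX : ∀ x, mX x = ∑ y : β, r (x, y))
    (hY : ∀ y, mY y = ∑ x : α, r (x, y))
    (hsX : ∑ x : α, mX x = 1) :
    ∑ c : α × β, (r c * Real.logb b (mX c.1) + r c * Real.logb b (mY c.2))
      ≤ ∑ c : α × β, r c * Real.logb b (r c) := by
  have hlb : 0 < Real.log b := Real.log_pos hb
  have hmX0 : ∀ x, 0 ≤ mX x := fun x => (hX x) ▸ Finset.sum_nonneg fun y _ => hr0 _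
  have hmY0 : ∀ y, 0 ≤ mY y := fun y => (hY y) ▸ Finset.sum_nonneg fun x _ => hr0 _
  have hrmX : ∀ x y, r (x, y) ≤ mX x := fun x y => by
    rw [hX x]; exact Finset.single_le_sum (f := fun i => r (x, i)) (fun i _ => hr0 _) (Finset.mem_univ y)
  have hrmY : ∀ x y, r (x, y) ≤ mY y := fun x y => by
    rw [hY y]; exact Finset.single_le_sum (f := fun i => r (i, y)) (fun i _ => hr0 _) (Finset.mem_univ x)
  have hsY : ∑ y : β, mY y = 1 := by
    simp_rw [hY]; rw [Finset.sum_comm]; simp_rw [← hX]; exact hsX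
  have hsr : ∑ c : α × β, r c = 1 := by
    rw [Fintype.sum_prod_type]; simp_rw [← hX]; exact hsX
  have hsq : ∑ c : α × β, mX c.1 * mY c.2 = 1 := by
    rw [Fintype.sum_prod_type, ← Finset.sum_mul_sum, hsX, hsY, one_mul]
  have key : ∀ c : α × β,
      r c * Real.logb b (mX c.1) + r c * Real.logb b (mY c.2) - r c * Real.logb b (r c)
        ≤ (mX c.1 * mY c.2 - r c) / Real.log b := by
    rintro ⟨x, y⟩
    rcases eq_or_lt_of_le (hr0 (x, y)) with h | h
    · rw [← h]
      simp only [zero_mul, add_zero, sub_zero, zero_add]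
      exact div_nonneg (mul_nonneg (hmX0 x) (hmY0 y)) hlb.le
    · have hx : 0 < mX x := lt_of_lt_of_le h (hrmX x y)
      have hy : 0 < mY y := lt_of_lt_of_le h (hrmY x y)
      have hq : 0 < mX x * mY y := mul_pos hx hy
      have h1 : Real.log (mX x * mY y / r (x, y)) ≤ mX x * mY y / r (x, y) - 1 :=
        Real.log_le_sub_one_of_pos (by positivity)
      rw [Real.log_div (ne_of_gt hq) (ne_of_gt h)] at h1
      have hlog : r (x, y) * (Real.log (mX x * mY y) - Real.log (r (x, y)))
          ≤ mX x * mY y - r (x, y) := by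
        have h2 := mul_le_mul_of_nonneg_left h1 (le_of_lt h)
        calc r (x, y) * (Real.log (mX x * mY y) - Real.log (r (x, y)))
            ≤ r (x, y) * (mX x * mY y / r (x, y) - 1) := h2
          _ = mX x * mY y - r (x, y) := by field_simp
      rw [Real.log_mul (ne_of_gt hx) (ne_of_gt hy)] at hlog
      simp only [Real.logb]
      have heq : r (x, y) * (Real.log (mX x) / Real.log b)
          + r (x, y) * (Real.log (mY y) / Real.log b)
          - r (x, y) * (Real.log (r (x, y)) / Real.log b)
          = (r (x, y) * (Real.log (mX x) + Real.log (mY y) - Real.log (r (x, y))))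
            / Real.log b := by ring
      rw [heq]
      exact div_le_div_of_nonneg_right hlog hlb.le
  have hsumkey := Finset.sum_le_sum (fun c (_ : c ∈ Finset.univ) => key c)
  rw [Finset.sum_sub_distrib] at hsumkey
  have h2 : ∑ c : α × β, (mX c.1 * mY c.2 - r c) / Real.log b = 0 := by
    rw [← Finset.sum_div, Finset.sum_sub_distrib, hsq, hsr]
    simp
  linarith [hsumkey, h2.le, h2.ge]

/-- `H(X,Y) ≤ H(X) + H(Y)` -/
lemma entH_pair_le_add (hb : 1 < b) (hp : IsPMF p) (X : Ω → α) (Y : Ω → β) :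
    entH b p (fun ω => (X ω, Y ω)) ≤ entH b p X + entH b p Y := by
  classical
  have hg := gibbs_sum hb (fun c => probEvent p (fun ω => (X ω, Y ω) = c))
    (fun x => probEvent p (fun ω => X ω = x)) (fun y => probEvent p (fun ω => Y ω = y))
    (fun c => probEvent_nonneg hp _)
    (fun x => probEvent_marginal_left hp X Y x)
    (fun y => probEvent_marginal_right hp X Y y)
    (sum_probEvent hp X)
  have eX : entH b p X
      = -∑ c : α × β, probEvent p (fun ω => (X ω, Y ω) = c) * Real.logb b (probEvent p (fun ω => X ω = c.1)) := by
    unfold entH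
    congr 1
    rw [Fintype.sum_prod_type]
    refine Finset.sum_congr rfl fun x _ => ?_
    nth_rewrite 1 [probEvent_marginal_left hp X Y x]
    rw [Finset.sum_mul]
  have eY : entH b p Y
      = -∑ c : α × β, probEvent p (fun ω => (X ω, Y ω) = c) * Real.logb b (probEvent p (fun ω => Y ω = c.2)) := by
    unfold entH
    congr 1
    rw [Fintype.sum_prod_type, Finset.sum_comm]
    refine Finset.sum_congr rfl fun y _ => ?_
    nth_rewrite 1 [probEvent_marginal_right hp X Y y]
    rw [Finset.sum_mul]
  rw [eX, eY]
  unfold entH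
  rw [Finset.sum_add_distrib] at hg
  linarith [hg]

/-- Entropy is invariant under injective post-composition. -/
lemma entH_comp_inj {γ : Type} [Fintype γ] (hp : IsPMF p)
    (f : α → γ) (hf : Function.Injective f) (X : Ω → α) :
    entH b p (fun ω => f (X ω)) = entH b p X := by
  classical
  unfold entH
  congr 1
  rw [← Finset.sum_subset (Finset.subset_univ (Finset.univ.image f))]
  · rw [Finset.sum_image (fun x _ y _ h => hf h)]
    refine Finset.sum_congr rfl fun x _ => ?_
    rw [probEvent_congr (fun ω => hf.eq_iff (a := X ω) (b := x))]
  · intro y _ hy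
    have : probEvent p (fun ω => f (X ω) = y) = 0 := by
      refine probEvent_false hp fun ω h => hy ?_
      exact Finset.mem_image.mpr ⟨X ω, Finset.mem_univ _, h⟩
    rw [this]
    simp

lemma entH_of_unique [Unique α] (hp : IsPMF p) (X : Ω → α) : entH b p X = 0 := by
  classical
  unfold entH
  rw [Fintype.sum_unique]
  have h1 : probEvent p (fun ω => X ω = default) = 1 := by
    unfold probEvent
    rw [← hp.2]
    exact Finset.sum_congr rfl fun ω _ => by simp [Subsingleton.elim (X ω) default]
  rw [h1]
  simp

end Entropy

section Tuples
variable {Ω : Type} [Fintype Ω] {b : ℝ} {p : Ω → ℝ}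

lemma entH_finsetPi_le {ι τ : Type} [DecidableEq ι] [Fintype τ]
    (hb : 1 < b) (hp : IsPMF p) (Q : ι → Ω → τ) (S : Finset ι) :
    entH b p (fun ω => (fun n : S => Q n ω)) ≤ ∑ n ∈ S, entH b p (Q n) := by
  classical
  induction S using Finset.induction_on with
  | empty =>
      haveI : IsEmpty {x // x ∈ (∅ : Finset ι)} := ⟨fun x => Finset.notMem_empty x.1 x.2⟩
      rw [entH_of_unique hp]
      simp
  | @insert a S ha ih =>
      have hinj : Function.Injective (fun g : ({x // x ∈ insert a S} → τ) =>
          (g ⟨a, Finset.mem_insert_self a S⟩,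
           fun n : S => g ⟨n.1, Finset.mem_insert_of_mem n.2⟩)) := by
        intro g g' h
        funext x
        rcases Finset.mem_insert.1 x.2 with h1 | h1
        · have hx : x = ⟨a, Finset.mem_insert_self a S⟩ := Subtype.ext h1
          rw [hx]
          exact congrArg Prod.fst h
        · have h2 := congrFun (congrArg Prod.snd h) ⟨x.1, h1⟩
          simpa using h2
      have e : entH b p (fun ω => (Q a ω, fun n : S => Q n ω))
          = entH b p (fun ω => (fun n : (insert a S : Finset ι) => Q n ω)) :=
        entH_comp_inj hp _ hinj (fun ω => (fun n : (insert a S : Finset ι) => Q n ω))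
      rw [Finset.sum_insert ha, ← e]
      have h3 := entH_pair_le_add hb hp (Q a) (fun ω => (fun n : S => Q n ω))
      linarith

end Tuples

lemma card_filter_mem_powersetCard {ι : Type} [DecidableEq ι]
    (T : Finset ι) (k : ℕ) (a : ι) (ha : a ∈ T) (hk : 1 ≤ k) :
    ((Finset.powersetCard k T).filter (fun S => a ∈ S)).card
      = (T.card - 1).choose (k - 1) := by
  rw [← Finset.card_erase_of_mem ha, ← Finset.card_powersetCard (k - 1) (T.erase a)]
  refine Finset.card_bij' (fun S _ => S.erase a) (fun B _ => insert a B) ?_ ?_ ?_ ?_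
  · intro S hS
    rw [Finset.mem_filter, Finset.mem_powersetCard] at hS
    rw [Finset.mem_powersetCard]
    exact ⟨Finset.erase_subset_erase a hS.1.1,
      by rw [Finset.card_erase_of_mem hS.2, hS.1.2]⟩
  · intro B hB
    rw [Finset.mem_powersetCard] at hB
    have haB : a ∉ B := fun h => (Finset.mem_erase.1 (hB.1 h)).1 rfl
    rw [Finset.mem_filter, Finset.mem_powersetCard]
    refine ⟨⟨Finset.insert_subset ha (hB.1.trans (Finset.erase_subset a T)), ?_⟩,
      Finset.mem_insert_self a B⟩
    rw [Finset.card_insert_of_notMem haB, hB.2]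
    omega
  · intro S hS
    rw [Finset.mem_filter] at hS
    exact Finset.insert_erase hS.2
  · intro B hB
    rw [Finset.mem_powersetCard] at hB
    have haB : a ∉ B := fun h => (Finset.mem_erase.1 (hB.1 h)).1 rfl
    exact Finset.erase_insert haB

section Derived
variable {Ω α β δ : Type} [Fintype Ω] [Fintype α] [Fintype β] [Fintype δ]
variable {b : ℝ} {p : Ω → ℝ}

lemma condH_nonneg (hb : 1 < b) (hp : IsPMF p) (X : Ω → α) (Y : Ω → β) :
    0 ≤ condH b p X Y :=
  sub_nonneg.mpr (entH_snd_le_pair hb hp X Y)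

lemma condH_le_entH (hb : 1 < b) (hp : IsPMF p) (X : Ω → α) (Y : Ω → β) :
    condH b p X Y ≤ entH b p X := by
  have := entH_pair_le_add hb hp X Y
  unfold condH
  linarith

lemma mutI_add_condH (X : Ω → α) (Y : Ω → β) :
    mutI b p X Y + condH b p X Y = entH b p X := by
  unfold mutI condH
  ring

lemma mutI_chain (X : Ω → α) (Y : Ω → β) (Z : Ω → δ) :
    mutI b p X (fun ω => (Y ω, Z ω)) = mutI b p X Z + condMI b p X Y Z := by
  unfold mutI condMI condH
  ring

lemma condMI_eq_flip (hp : IsPMF p) (X : Ω → α) (Y : Ω → β) (Z : Ω → δ) :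
    condMI b p X Y Z = condH b p Y Z - condH b p Y (fun ω => (X ω, Z ω)) := by
  have hinj : Function.Injective (fun c : α × (β × δ) => (c.2.1, (c.1, c.2.2))) := by
    intro c c' h
    cases c with
    | mk c1 c2 => cases c2 with
      | mk c21 c22 =>
        cases c' with
        | mk d1 d2 => cases d2 with
          | mk d21 d22 => simp_all [Prod.ext_iff]
  have e : entH b p (fun ω => (Y ω, (X ω, Z ω)))
      = entH b p (fun ω => (X ω, (Y ω, Z ω))) :=
    entH_comp_inj hp _ hinj (fun ω => (X ω, (Y ω, Z ω)))
  unfold condMI condH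
  beta_reduce
  rw [e]
  ring

end Derived

/-- Threshold secret sharing total-communication lower bound: if the secret `Δ`
with `H(Δ) = L` is recoverable from any `R - |D|` of the shares `(Q_n)_{n∈[N]∖D}`
and independent of any `X` of those shares (with `X < R - |D| ≤ N - |D|`), then
`∑_{n∈[N]∖D} H(Q_n) ≥ L·(N-|D|)/(R-X-|D|)`. -/
theorem threshold_secret_sharing_total_bound
    {Ω σ τ : Type} [Fintype Ω] [Fintype σ] [Fintype τ]
    (b : ℝ) (hb : 1 < b) (p : Ω → ℝ) (hp : IsPMF p)
    {N : ℕ} (D : Finset (Fin N)) (R X : ℕ) (L : ℝ)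
    (Δ : Ω → σ) (Q : Fin N → Ω → τ)
    (hL : entH b p Δ = L)
    (hXR : X + D.card < R) (hRN : R ≤ N)
    (hrec : ∀ R' : Finset (Fin N), R' ⊆ Finset.univ \ D → R'.card = R - D.card →
      condH b p Δ (fun ω => (fun n : R' => Q n ω)) = 0)
    (hsec : ∀ X' : Finset (Fin N), X' ⊆ Finset.univ \ D → X'.card = X →
      mutI b p Δ (fun ω => (fun n : X' => Q n ω)) = 0) :
    L * ((N : ℝ) - D.card) / ((R : ℝ) - X - D.card)
      ≤ ∑ n ∈ Finset.univ \ D, entH b p (Q n) := by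
  classical
  set T : Finset (Fin N) := Finset.univ \ D with hT
  set k : ℕ := R - X - D.card with hk
  have hDN : D.card ≤ N := by
    have := Finset.card_le_univ D
    simpa using this
  have hTcard : T.card = N - D.card := by
    rw [hT, Finset.card_sdiff_of_subset (Finset.subset_univ D), Finset.card_univ, Fintype.card_fin]
  have hk1 : 1 ≤ k := by omega
  have hkT : k ≤ T.card := by omega
  -- per-set bound
  have key : ∀ S ∈ Finset.powersetCard k T, L ≤ ∑ n ∈ S, entH b p (Q n) := by
    intro S hS
    rw [Finset.mem_powersetCard] at hS
    obtain ⟨hST, hScard⟩ := hS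
    have hcard2 : X ≤ (T \ S).card := by
      rw [Finset.card_sdiff_of_subset hST]
      omega
    obtain ⟨X', hX'sub, hX'card⟩ := Finset.exists_subset_card_eq hcard2
    have hX'T : X' ⊆ T := hX'sub.trans (Finset.sdiff_subset)
    have hdisj : Disjoint S X' :=
      Finset.disjoint_left.mpr fun n hnS hnX' => (Finset.mem_sdiff.1 (hX'sub hnX')).2 hnS
    set R' : Finset (Fin N) := S ∪ X' with hR'
    have hR'T : R' ⊆ T := Finset.union_subset hST hX'T
    have hR'card : R'.card = R - D.card := by
      rw [hR', Finset.card_union_of_disjoint hdisj, hScard, hX'card]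
      omega
    have hrec' := hrec R' hR'T hR'card
    have hsec' := hsec X' hX'T hX'card
    set QS : Ω → ({n // n ∈ S} → τ) := fun ω => (fun n : S => Q n ω) with hQS
    set QX : Ω → ({n // n ∈ X'} → τ) := fun ω => (fun n : X' => Q n ω) with hQX
    set QR : Ω → ({n // n ∈ R'} → τ) := fun ω => (fun n : R' => Q n ω) with hQR
    -- split map
    have hmemS : ∀ n : {n // n ∈ S}, n.1 ∈ R' := fun n =>
      Finset.mem_union_left X' n.2
    have hmemX : ∀ n : {n // n ∈ X'}, n.1 ∈ R' := fun n =>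
      Finset.mem_union_right S n.2
    set φ : ({n // n ∈ R'} → τ) → ({n // n ∈ S} → τ) × ({n // n ∈ X'} → τ) :=
      fun g => (fun n => g ⟨n.1, hmemS n⟩, fun n => g ⟨n.1, hmemX n⟩) with hφ
    have hφinj : Function.Injective φ := by
      intro g g' h
      funext x
      rcases Finset.mem_union.1 x.2 with h1 | h1
      · have h2 := congrFun (congrArg Prod.fst h) ⟨x.1, h1⟩
        simpa using h2
      · have h2 := congrFun (congrArg Prod.snd h) ⟨x.1, h1⟩
        simpa using h2
    have e1 : entH b p (fun ω => (QS ω, QX ω)) = entH b p QR :=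
      entH_comp_inj hp φ hφinj QR
    have hinj2 : Function.Injective
        (fun c : σ × ({n // n ∈ R'} → τ) => (c.1, φ c.2)) := by
      intro c c' h
      rw [Prod.ext_iff] at h ⊢
      exact ⟨h.1, hφinj h.2⟩
    have e2 : entH b p (fun ω => (Δ ω, (QS ω, QX ω)))
        = entH b p (fun ω => (Δ ω, QR ω)) :=
      entH_comp_inj hp _ hinj2 (fun ω => (Δ ω, QR ω))
    -- chain of (in)equalities
    have hL1 : L = mutI b p Δ QR := by
      have h1 := mutI_add_condH (b := b) (p := p) Δ QR
      rw [hrec'] at h1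
      rw [← hL]
      linarith
    have hL2 : mutI b p Δ QR = mutI b p Δ (fun ω => (QS ω, QX ω)) := by
      unfold mutI
      rw [e1, e2]
    have hL3 : mutI b p Δ (fun ω => (QS ω, QX ω))
        = mutI b p Δ QX + condMI b p Δ QS QX := mutI_chain Δ QS QX
    have hL4 : condMI b p Δ QS QX
        = condH b p QS QX - condH b p QS (fun ω => (Δ ω, QX ω)) :=
      condMI_eq_flip hp Δ QS QX
    have hnn : 0 ≤ condH b p QS (fun ω => (Δ ω, QX ω)) := condH_nonneg hb hp _ _
    have hle1 : condH b p QS QX ≤ entH b p QS := condH_le_entH hb hp QS QX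
    have hle2 : entH b p QS ≤ ∑ n ∈ S, entH b p (Q n) :=
      entH_finsetPi_le hb hp Q S
    rw [hL1, hL2, hL3, hL4, hsec']
    linarith
  -- averaging
  set f : Fin N → ℝ := fun n => entH b p (Q n) with hf
  have hsum : (Finset.powersetCard k T).card • L
      ≤ ∑ S ∈ Finset.powersetCard k T, ∑ n ∈ S, f n :=
    Finset.card_nsmul_le_sum _ _ _ key
  have hswap : ∑ S ∈ Finset.powersetCard k T, ∑ n ∈ S, f n
      = ∑ n ∈ T, (((T.card - 1).choose (k - 1) : ℕ) : ℝ) * f n := by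
    have step1 : ∀ S ∈ Finset.powersetCard k T,
        ∑ n ∈ S, f n = ∑ n ∈ T, if n ∈ S then f n else 0 := by
      intro S hS
      have hST : S ⊆ T := (Finset.mem_powersetCard.1 hS).1
      rw [← Finset.sum_filter]
      congr 1
      ext n
      simp only [Finset.mem_filter]
      exact ⟨fun h => ⟨hST h, h⟩, fun h => h.2⟩
    rw [Finset.sum_congr rfl step1, Finset.sum_comm]
    refine Finset.sum_congr rfl fun n hn => ?_
    rw [← Finset.sum_filter, Finset.sum_const,
        card_filter_mem_powersetCard T k n hn hk1, nsmul_eq_mul]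
  rw [hswap, ← Finset.mul_sum] at hsum
  rw [Finset.card_powersetCard, nsmul_eq_mul] at hsum
  -- arithmetic conclusion
  set M : ℕ := T.card with hM
  set F : ℝ := ∑ n ∈ T, f n with hF
  have hchoose_id : M * (M - 1).choose (k - 1) = M.choose k * k := by
    have h1 := Nat.add_one_mul_choose_eq (M - 1) (k - 1)
    have h2 : M - 1 + 1 = M := by omega
    have h3 : k - 1 + 1 = k := by omega
    rw [h2, h3] at h1
    exact h1
  have hC2pos : 0 < (M - 1).choose (k - 1) := Nat.choose_pos (by omega)
  have hgoal_cast1 : (N : ℝ) - D.card = (M : ℝ) := by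
    have h5 : M + D.card = N := by omega
    have h6 := congrArg (Nat.cast (R := ℝ)) h5
    push_cast at h6
    linarith
  have hgoal_cast2 : (R : ℝ) - X - D.card = (k : ℝ) := by
    have h5 : k + X + D.card = R := by omega
    have h6 := congrArg (Nat.cast (R := ℝ)) h5
    push_cast at h6
    linarith
  rw [hgoal_cast1, hgoal_cast2]
  have hkpos : (0:ℝ) < (k : ℝ) := by
    exact_mod_cast Nat.lt_of_lt_of_le Nat.zero_lt_one hk1
  rw [div_le_iff₀ hkpos]
  have hmul := mul_le_mul_of_nonneg_left hsum (le_of_lt hkpos)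
  have hcast : (k : ℝ) * (M.choose k : ℝ) = (M : ℝ) * (((M - 1).choose (k - 1) : ℕ) : ℝ) := by
    have h6 := congrArg (Nat.cast (R := ℝ)) hchoose_id
    push_cast at h6
    linarith
  have hC2pos' : (0:ℝ) < (((M - 1).choose (k - 1) : ℕ) : ℝ) := by exact_mod_cast hC2pos
  have h7 : ((M:ℝ) * (((M - 1).choose (k - 1) : ℕ) : ℝ)) * L
      ≤ ((k:ℝ) * (((M - 1).choose (k - 1) : ℕ) : ℝ)) * F := by
    calc ((M:ℝ) * (((M - 1).choose (k - 1) : ℕ) : ℝ)) * L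
        = (k:ℝ) * ((M.choose k : ℝ) * L) := by rw [← hcast]; ring
      _ ≤ (k:ℝ) * ((((M - 1).choose (k - 1) : ℕ) : ℝ) * F) := hmul
      _ = ((k:ℝ) * (((M - 1).choose (k - 1) : ℕ) : ℝ)) * F := by ring
  have h9 : (((M - 1).choose (k - 1) : ℕ) : ℝ) * ((M:ℝ) * L)
      ≤ (((M - 1).choose (k - 1) : ℕ) : ℝ) * ((k:ℝ) * F) := by
    calc (((M - 1).choose (k - 1) : ℕ) : ℝ) * ((M:ℝ) * L)
        = ((M:ℝ) * (((M - 1).choose (k - 1) : ℕ) : ℝ)) * L := by ring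
      _ ≤ ((k:ℝ) * (((M - 1).choose (k - 1) : ℕ) : ℝ)) * F := h7
      _ = (((M - 1).choose (k - 1) : ℕ) : ℝ) * ((k:ℝ) * F) := by ring
  have h10 := le_of_mul_le_mul_left h9 hC2pos'
  linarith
end

section
/- Update threshold converse (numeric consequence): if (N-|D|)/(R_r - X - |D|) ≤ Σ_{n∈[N]\D} H(S_n)/L ≤ (N-|D|)/K_c with R_r - X - |D| > 0 and K_c > 0, then |D| ≤ R_r - K_c - X; moreover if |D|, R_r, X are integers and K_c is a real number, then |D| ≤ R_r - ⌈K_c⌉ - X. -/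
/-- Update threshold converse (numeric consequence): if
`(N-|D|)/(R_r - X - |D|) ≤ (∑_{n∈[N]∖D} H(S_n))/L ≤ (N-|D|)/K_c` with
`R_r - X - |D| > 0` and `K_c > 0`, then `|D| ≤ R_r - K_c - X`; moreover, since
`|D|, R_r, X` are integers and `K_c` is real, `|D| ≤ R_r - ⌈K_c⌉ - X`. -/
theorem update_threshold_numeric_consequence
    {N : ℕ} (Rr X : ℕ) (D : Finset (Fin N)) (hDN : D.card < N)
    (Kc L : ℝ) (hKc : 0 < Kc) (hL : 0 < L)
    (HS : Fin N → ℝ) (hHS : ∀ n, 0 ≤ HS n)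
    (hpos : (0 : ℝ) < (Rr : ℝ) - X - D.card)
    (h1 : ((N : ℝ) - D.card) / ((Rr : ℝ) - X - D.card)
        ≤ (∑ n ∈ Finset.univ \ D, HS n) / L)
    (h2 : (∑ n ∈ Finset.univ \ D, HS n) / L ≤ ((N : ℝ) - D.card) / Kc) :
    (D.card : ℝ) ≤ (Rr : ℝ) - Kc - X ∧
    (D.card : ℤ) ≤ (Rr : ℤ) - ⌈Kc⌉ - X := by
  have hNd : (0 : ℝ) < (N : ℝ) - D.card := by
    have := hDN; push_cast; exact sub_pos.mpr (by exact_mod_cast this)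
  have h := h1.trans h2
  have hKle : Kc ≤ (Rr : ℝ) - X - D.card := by
    rw [div_le_div_iff₀ hpos hKc] at h
    nlinarith
  have hreal : (D.card : ℝ) ≤ (Rr : ℝ) - Kc - X := by linarith
  refine ⟨hreal, ?_⟩
  have : ⌈Kc⌉ ≤ ((Rr : ℤ) - X - D.card) := by
    rw [Int.ceil_le]; push_cast; linarith
  linarith
end
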